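/- arXiv:2409.13487 — 6 statements merged into one kernel-verified Lean document; each statement's English description precedes it below -/
import Mathlib

section
/- If the first syzygy H of the R-module R_S (that is, the kernel in a short exact sequence 0 → H → P → R_S → 0 with P projective) is S-strongly flat, then the class of S-weakly cotorsion R-modules is closed under cokernels of monomorphisms (i.e., it is coresolving). -/
open CategoryTheory

universe u

variable (R : Type u) [CommRing R]

/-- `Ext^n_R(M, N) = 0`. -/
def extVanish (n : ℕ) (M N : Type u) [AddCommGroup M] [Module R M]
    [AddCommGroup N] [Module R N] : Prop :=
  Subsingleton (((Ext R (ModuleCat.{u} R) n).obj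
    (Opposite.op (ModuleCat.of R M))).obj (ModuleCat.of R N))

/-- `C` is `S`-weakly cotorsion if `Ext^1_R(R_S, C) = 0`. -/
def IsWeaklyCotorsion (S : Submonoid R) (C : Type u) [AddCommGroup C] [Module R C] : Prop :=
  extVanish R 1 (Localization S) C

/-- `F` is `S`-strongly flat if `Ext^1_R(F, C) = 0` for all `S`-weakly cotorsion `C`. -/
def IsStronglyFlat (S : Submonoid R) (F : Type u) [AddCommGroup F] [Module R F] : Prop :=
  ∀ (C : Type u) [AddCommGroup C] [Module R C], IsWeaklyCotorsion R S C → extVanish R 1 F C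


noncomputable section AuxRes
open CategoryTheory.Limits CategoryTheory.Projective
universe v

section Res
variable {C : Type u} [Category.{v} C] [Abelian C] [EnoughProjectives C]

namespace MyRes

def ofComplex {X Q : C} (p : Q ⟶ X) [Projective Q] [Epi p] : ChainComplex C ℕ :=
  ChainComplex.mk' Q (Projective.syzygies p) (Projective.d p)
    (fun f => ⟨_, Projective.d f, by
      exact (Category.assoc _ _ _).trans
        ((congrArg (fun g => Projective.π (kernel f) ≫ g) (kernel.condition f)).trans comp_zero)⟩)

lemma ofComplex_d_1_0 {X Q : C} (p : Q ⟶ X) [Projective Q] [Epi p] :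
    (ofComplex p).d 1 0 = Projective.d p := by
  simp [ofComplex]

lemma ofComplex_exactAt_succ {X Q : C} (p : Q ⟶ X) [Projective Q] [Epi p] (n : ℕ) :
    (ofComplex p).ExactAt (n + 1) := by
  rw [HomologicalComplex.exactAt_iff' _ (n + 1 + 1) (n + 1) n (by simp) (by simp)]
  refine (ShortComplex.exact_iff_of_iso ?_).mpr (exact_d_f ((ofComplex p).d (n + 1) n))
  refine ShortComplex.isoMk (ChainComplex.mk'XIso Q (Projective.syzygies p) (Projective.d p)
    (fun f => ⟨_, Projective.d f, (Category.assoc _ _ _).trans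
      ((congrArg (fun g => Projective.π (kernel f) ≫ g) (kernel.condition f)).trans comp_zero)⟩) n)
    (Iso.refl _) (Iso.refl _) ?_ ?_
  · exact (ChainComplex.mk'_d _ _ _ _ n).symm.trans (Category.comp_id _).symm
  · exact (Category.id_comp _).trans (Category.comp_id _).symm

instance {X Q : C} (p : Q ⟶ X) [Projective Q] [Epi p] (n : ℕ) :
    Projective ((ofComplex p).X n) := by
  obtain (_ | _ | _ | n) := n
  · exact inferInstanceAs (Projective Q)
  all_goals apply Projective.projective_over

/-- A projective resolution built from a chosen epi `p : Q ⟶ X` with `Q` projective. -/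
def ofEpi {X Q : C} (p : Q ⟶ X) [Projective Q] [Epi p] : ProjectiveResolution X where
  complex := ofComplex p
  π := (ChainComplex.toSingle₀Equiv _ _).symm ⟨p, by
          rw [ofComplex_d_1_0]
          exact (Category.assoc _ _ _).trans
            ((congrArg (fun g => Projective.π (kernel p) ≫ g) (kernel.condition p)).trans comp_zero)⟩
  quasiIso := ⟨fun n => by
    cases n
    · rw [ChainComplex.quasiIsoAt₀_iff, ShortComplex.quasiIso_iff_of_zeros']
      · refine (ShortComplex.exact_and_epi_g_iff_of_iso ?_).2
          ⟨exact_d_f p, by dsimp; infer_instance⟩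
        exact ShortComplex.isoMk (Iso.refl _) (Iso.refl _) (Iso.refl _)
          (by erw [Category.id_comp, Category.comp_id]; exact (ofComplex_d_1_0 p).symm)
          (by
            erw [Category.id_comp, Category.comp_id]
            exact (ChainComplex.toSingle₀Equiv_symm_apply_f_zero (C := ofComplex p) p _).symm)
      all_goals rfl
    · rw [quasiIsoAt_iff_exactAt']
      · apply ofComplex_exactAt_succ
      · apply ChainComplex.exactAt_succ_single_obj⟩

end MyRes
end Res
end AuxRes

noncomputable section AuxLemma
open CategoryTheory.Limits CategoryTheory.Projective

variable {R₀ : Type u} [CommRing R₀]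
  {K Q X Y : Type u} [AddCommGroup K] [Module R₀ K] [AddCommGroup Q] [Module R₀ Q]
  [AddCommGroup X] [Module R₀ X] [AddCommGroup Y] [Module R₀ Y]

lemma extVanish_one_iff (i : K →ₗ[R₀] Q) (p : Q →ₗ[R₀] X)
    (hi : Function.Injective i) (hp : Function.Surjective p)
    (hip : Function.Exact i p) (hQ : Module.Projective R₀ Q) :
    extVanish R₀ 1 X Y ↔ ∀ φ : K →ₗ[R₀] Y, ∃ ψ : Q →ₗ[R₀] Y, ψ ∘ₗ i = φ := by
  classical
  haveI : CategoryTheory.Projective (ModuleCat.of R₀ Q) := (IsProjective.iff_projective Q).mp hQ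
  let p' : ModuleCat.of R₀ Q ⟶ ModuleCat.of R₀ X := ModuleCat.ofHom p
  haveI : Epi p' := (ModuleCat.epi_iff_surjective _).mpr hp
  let res : ProjectiveResolution (ModuleCat.of R₀ X) := MyRes.ofEpi p'
  let Y' : ModuleCat.{u} R₀ := ModuleCat.of R₀ Y
  -- step 1 : reduce to exactness of the Hom complex at 1
  have e := res.isoExt (R := R₀) 1 Y'
  have h1 : extVanish R₀ 1 X Y ↔
      Subsingleton ((res.complex.linearYonedaObj R₀ Y').homology 1) :=
    Equiv.subsingleton_congr ((forget _).mapIso e).toEquiv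
  have h2 : Subsingleton ((res.complex.linearYonedaObj R₀ Y').homology 1) ↔
      (res.complex.linearYonedaObj R₀ Y').ExactAt 1 := by
    rw [HomologicalComplex.exactAt_iff_isZero_homology]
    constructor
    · intro h; exact ModuleCat.isZero_of_subsingleton _
    · intro h
      refine ⟨fun a b => ?_⟩
      have hid : 𝟙 ((res.complex.linearYonedaObj R₀ Y').homology 1) = 0 := h.eq_of_src _ _
      have ha := congrArg (fun f => f.hom a) hid
      have hb := congrArg (fun f => f.hom b) hid
      simpa using ha.trans hb.symm
  rw [h1, h2]
  rw [HomologicalComplex.exactAt_iff' _ 0 1 2 (by simp) (by simp),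
    ShortComplex.moduleCat_exact_iff]
  -- geometric data
  have hd : ∀ (m n : ℕ) (φ : res.complex.X m ⟶ Y'),
      (res.complex.linearYonedaObj R₀ Y').d m n φ = res.complex.d n m ≫ φ := fun _ _ _ => rfl
  let kk : ModuleCat.{u} R₀ := kernel (C := ModuleCat.{u} R₀) p'
  let ρ : res.complex.X 1 ⟶ kk := Projective.π kk
  let κ : kk ⟶ ModuleCat.of R₀ Q := kernel.ι (C := ModuleCat.{u} R₀) p'
  have hd10 : res.complex.d 1 0 = ρ ≫ κ := MyRes.ofComplex_d_1_0 p'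
  have hρ : Function.Surjective ρ := (ModuleCat.epi_iff_surjective ρ).mp (Projective.π_epi kk)
  have hd21ρ : res.complex.d 2 1 ≫ ρ = 0 := by
    rw [← cancel_mono κ, Category.assoc, ← hd10, zero_comp]
    exact HomologicalComplex.d_comp_d _ _ _ _
  -- exactness at degree 1 of the resolution
  have hex : ∀ s : res.complex.X 1, res.complex.d 1 0 s = 0 →
      ∃ t : res.complex.X 2, res.complex.d 2 1 t = s := by
    have := MyRes.ofComplex_exactAt_succ p' 0
    rw [HomologicalComplex.exactAt_iff' _ 2 1 0 (by simp) (by simp),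
      ShortComplex.moduleCat_exact_iff] at this
    exact this
  -- the comparison between `K` and the categorical kernel
  have h' : LinearMap.range i = LinearMap.ker p := (LinearMap.exact_iff.mp hip).symm
  let eK : K ≃ₗ[R₀] LinearMap.ker p := (LinearEquiv.ofInjective i hi).trans
    (LinearEquiv.ofEq _ _ h')
  let kiso := ModuleCat.kernelIsoKer p'
  let j : K →ₗ[R₀] kk := kiso.inv.hom ∘ₗ
    (eK : K →ₗ[R₀] LinearMap.ker p)
  have hκj : ∀ k : K, κ (j k) = i k := by
    intro k
    have h0 := ModuleCat.kernelIsoKer_inv_kernel_ι_apply p' (eK k)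
    have h1 : κ (j k) = (LinearMap.ker p).subtype (eK k) := h0
    rw [h1]
    show ((eK k : LinearMap.ker p) : Q) = i k
    simp only [eK, LinearEquiv.trans_apply, LinearEquiv.coe_ofEq_apply,
      LinearEquiv.ofInjective_apply]
  have hjsurj : Function.Surjective j := by
    intro x
    refine ⟨eK.symm (kiso.hom x), ?_⟩
    show kiso.inv (eK (eK.symm (kiso.hom x))) = x
    rw [eK.apply_symm_apply]
    exact kiso.hom_inv_id_apply x
  let jinv : ↑kk →ₗ[R₀] K := (eK.symm : LinearMap.ker p →ₗ[R₀] K) ∘ₗ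
    kiso.hom.hom
  have hjinv : ∀ k : K, jinv (j k) = k := by
    intro k
    show eK.symm (kiso.hom (kiso.inv (eK k))) = k
    have h2 : kiso.hom (kiso.inv (eK k)) = eK k :=
      kiso.inv_hom_id_apply (eK k)
    rw [h2, eK.symm_apply_apply]
  constructor
  · -- vanishing implies extension property
    intro hcond φ
    let φ1 : res.complex.X 1 ⟶ Y' := ρ ≫ (ModuleCat.ofHom (φ ∘ₗ jinv) : kk ⟶ Y')
    have hg : res.complex.d 2 1 ≫ φ1 = 0 := by
      show res.complex.d 2 1 ≫ ρ ≫ _ = 0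
      rw [← Category.assoc, hd21ρ, zero_comp]
    obtain ⟨ψ, hψ⟩ := hcond φ1 hg
    let ψ' : res.complex.X 0 ⟶ Y' := ψ
    refine ⟨ψ'.hom, ?_⟩
    have hψ' : (ρ ≫ κ) ≫ ψ' = φ1 := by rw [← hd10]; exact hψ
    have hmor : κ ≫ ψ' = ModuleCat.ofHom (φ ∘ₗ jinv) := by
      haveI : Epi ρ := Projective.π_epi kk
      refine (cancel_epi ρ).mp ?_
      exact (Category.assoc _ _ _).symm.trans hψ'
    ext k
    have h3 := congrArg (fun f => f.hom (j k)) hmor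
    have h4 : ψ' (κ (j k)) = φ (jinv (j k)) := h3
    rw [hκj, hjinv] at h4
    show ψ' (i k) = φ k
    exact h4
  · -- extension property implies vanishing
    intro hmod φ1 hφ1
    let φ1' : res.complex.X 1 ⟶ Y' := φ1
    have hφ1' : res.complex.d 2 1 ≫ φ1' = 0 := hφ1
    -- factor φ1 through `kk`
    let ρl : (res.complex.X 1 : Type u) →ₗ[R₀] kk := ρ.hom
    let φ1l : (res.complex.X 1 : Type u) →ₗ[R₀] Y := φ1'.hom
    have hker : LinearMap.ker ρl ≤ LinearMap.ker φ1l := by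
      intro s hs
      have hs' : ρ s = 0 := hs
      have hd10s : res.complex.d 1 0 s = 0 := by
        rw [hd10]
        show κ (ρ s) = 0
        rw [hs', map_zero]
      obtain ⟨t, ht⟩ := hex s hd10s
      have : φ1' (res.complex.d 2 1 t) = 0 := congrArg (fun f => f.hom t) hφ1'
      simpa [LinearMap.mem_ker, φ1l, ht] using this
    let φbar : ↑kk →ₗ[R₀] Y := ((LinearMap.ker ρl).liftQ φ1l hker) ∘ₗ
      ((ρl.quotKerEquivOfSurjective hρ).symm : ↑kk →ₗ[R₀] _)
    have hφbar : ∀ s, φbar (ρl s) = φ1l s := by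
      intro s
      have h5 : (ρl.quotKerEquivOfSurjective hρ).symm (ρl s) =
          Submodule.Quotient.mk s := by
        rw [LinearEquiv.symm_apply_eq]
        simp [LinearMap.quotKerEquivOfSurjective]
      show ((LinearMap.ker ρl).liftQ φ1l hker) ((ρl.quotKerEquivOfSurjective hρ).symm (ρl s)) = φ1l s
      rw [h5, Submodule.liftQ_apply]
    obtain ⟨ψ, hψ⟩ := hmod (φbar ∘ₗ j)
    let ψ' : ModuleCat.of R₀ Q ⟶ Y' := ModuleCat.ofHom ψ
    refine ⟨ψ', ?_⟩
    show res.complex.d 1 0 ≫ ψ' = φ1'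
    rw [hd10]
    ext s
    show ψ' (κ (ρ s)) = φ1' s
    have hκρ : ψ' (κ (ρ s)) = φbar (ρl s) := by
      obtain ⟨k, hk⟩ := hjsurj (ρ s)
      rw [← hk, hκj]
      have h6 : ψ (i k) = φbar (j k) := LinearMap.congr_fun hψ k
      exact h6.trans (by rw [hk])
    rw [hκρ]
    exact hφbar s


end AuxLemma

set_option maxHeartbeats 1000000 in
/-- If the first syzygy `H` of `R_S` (kernel in `0 → H → P → R_S → 0`, `P` projective)
is `S`-strongly flat, then the class of `S`-weakly cotorsion modules is closed under
cokernels of monomorphisms. -/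
theorem weaklyCotorsion_coresolving (S : Submonoid R) (H P : Type u)
    [AddCommGroup H] [Module R H] [AddCommGroup P] [Module R P]
    (i : H →ₗ[R] P) (p : P →ₗ[R] Localization S)
    (hi : Function.Injective i) (hp : Function.Surjective p) (hip : Function.Exact i p)
    (hP : Module.Projective R P) (hH : IsStronglyFlat R S H) :
    ∀ (A B C : Type u) [AddCommGroup A] [Module R A] [AddCommGroup B] [Module R B]
      [AddCommGroup C] [Module R C] (f : A →ₗ[R] B) (g : B →ₗ[R] C),
      Function.Injective f → Function.Surjective g → Function.Exact f g →
      IsWeaklyCotorsion R S A → IsWeaklyCotorsion R S B → IsWeaklyCotorsion R S C := by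
  intro A B C _ _ _ _ _ _ f g hf hg hfg hA hB
  -- free presentation of `H`
  let F := H →₀ R
  let π' : F →ₗ[R] H := Finsupp.linearCombination R (id : H → H)
  have hπ' : Function.Surjective π' := Finsupp.linearCombination_id_surjective R H
  have hFproj : Module.Projective R F := inferInstance
  -- extension properties from the vanishing hypotheses
  have hextH := (extVanish_one_iff (K := LinearMap.ker π') (Q := F) (X := H) (Y := A)
    (LinearMap.ker π').subtype π'
    (Submodule.injective_subtype _) hπ' (π'.exact_subtype_ker_map) hFproj).mp (hH A hA)
  have hextB := (extVanish_one_iff i p hi hp hip hP).mp hB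
  show extVanish R 1 (Localization S) C
  rw [extVanish_one_iff i p hi hp hip hP]
  intro φ
  -- lift `φ ∘ π'` along `g` using projectivity of `F`
  obtain ⟨l, hl⟩ := Module.projective_lifting_property (h := hFproj) g (φ ∘ₗ π') hg
  -- on the kernel of `π'`, `l` takes values in the image of `f`
  have hmem : ∀ k : LinearMap.ker π', l k ∈ LinearMap.range f := by
    intro k
    rw [← hfg.linearMap_ker_eq, LinearMap.mem_ker]
    have : g (l k) = φ (π' k) := LinearMap.congr_fun hl k
    rw [this, k.2, map_zero]
  let eA : A ≃ₗ[R] LinearMap.range f := LinearEquiv.ofInjective f hf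
  let l' : LinearMap.ker π' →ₗ[R] LinearMap.range f :=
    LinearMap.codRestrict _ (l ∘ₗ (LinearMap.ker π').subtype) hmem
  obtain ⟨θ, hθ⟩ := hextH ((eA.symm : LinearMap.range f →ₗ[R] A) ∘ₗ l')
  -- `ψ0` kills the kernel of `π'`
  let ψ0 : F →ₗ[R] B := l - f ∘ₗ θ
  have hψ0 : ∀ k : F, k ∈ LinearMap.ker π' → ψ0 k = 0 := by
    intro k hk
    have h7 : θ k = eA.symm (l' ⟨k, hk⟩) := LinearMap.congr_fun hθ ⟨k, hk⟩
    have h8 : f (eA.symm (l' ⟨k, hk⟩)) = (l' ⟨k, hk⟩ : B) := by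
      have := eA.apply_symm_apply (l' ⟨k, hk⟩)
      calc f (eA.symm (l' ⟨k, hk⟩)) = (eA (eA.symm (l' ⟨k, hk⟩)) : B) :=
            (LinearEquiv.ofInjective_apply f _).symm
        _ = (l' ⟨k, hk⟩ : B) := by rw [this]
    show l k - f (θ k) = 0
    rw [h7, h8]
    show l k - (l ∘ₗ (LinearMap.ker π').subtype) ⟨k, hk⟩ = 0
    simp
  -- descend `ψ0` to `ψbar : H →ₗ[R] B`
  have hker : LinearMap.ker π' ≤ LinearMap.ker ψ0 := fun k hk => hψ0 k hk
  let ψbar : H →ₗ[R] B := ((LinearMap.ker π').liftQ ψ0 hker) ∘ₗ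
    ((π'.quotKerEquivOfSurjective hπ').symm : H →ₗ[R] _)
  have hψbar : ∀ x : F, ψbar (π' x) = ψ0 x := by
    intro x
    have h5 : (π'.quotKerEquivOfSurjective hπ').symm (π' x) = Submodule.Quotient.mk x := by
      rw [LinearEquiv.symm_apply_eq]
      simp [LinearMap.quotKerEquivOfSurjective]
    show ((LinearMap.ker π').liftQ ψ0 hker) ((π'.quotKerEquivOfSurjective hπ').symm (π' x)) = ψ0 x
    rw [h5, Submodule.liftQ_apply]
  have hgψ : g ∘ₗ ψbar = φ := by
    ext h
    obtain ⟨x, hx⟩ := hπ' h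
    show g (ψbar h) = φ h
    rw [← hx, hψbar]
    show g (l x - f (θ x)) = φ (π' x)
    rw [map_sub, hfg.apply_apply_eq_zero (θ x), sub_zero]
    exact LinearMap.congr_fun hl x
  obtain ⟨χ, hχ⟩ := hextB ψbar
  refine ⟨g ∘ₗ χ, ?_⟩
  rw [LinearMap.comp_assoc, hχ, hgψ]
end

section
/- If the first syzygy of R_S is S-strongly flat, then Ext^n_R(F, C) = 0 for every S-strongly flat R-module F, every S-weakly cotorsion R-module C, and every n ≥ 1. -/
open CategoryTheory

universe u

variable (R : Type u) [CommRing R]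

namespace ExtVanishAux

open CategoryTheory Limits

variable {R}

noncomputable def yMap (X : ChainComplex (ModuleCat.{u} R) ℕ) {A B : ModuleCat.{u} R} (f : A ⟶ B) :
    X.linearYonedaObj R A ⟶ X.linearYonedaObj R B where
  f i := ((linearYoneda R (ModuleCat.{u} R)).map f).app (Opposite.op (X.X i))
  comm' i j hij := by
    ext (g : X.X i ⟶ A)
    change (X.d j i ≫ g) ≫ f = X.d j i ≫ (g ≫ f)
    simp

abbrev extV (n : ℕ) (X Y : ModuleCat.{u} R) : Prop :=
  Subsingleton (((Ext R (ModuleCat.{u} R) n).obj (Opposite.op X)).obj Y)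

lemma subsingleton_of_iso {A B : ModuleCat.{u} R} (e : A ≅ B) (h : Subsingleton B) :
    Subsingleton A := by
  have : Subsingleton ((forget (ModuleCat R)).obj B) := h
  exact ((forget (ModuleCat R)).mapIso e).toEquiv.subsingleton

lemma subsingleton_of_isZero {X : ModuleCat.{u} R} (h : IsZero X) : Subsingleton X := by
  constructor
  intro a b
  have h1 : 𝟙 X = 0 := h.eq_of_src _ _
  have : ∀ c : X, c = 0 := by
    intro c
    calc c = (𝟙 X) c := rfl
    _ = (0 : X ⟶ X) c := by rw [h1]
    _ = 0 := rfl
  rw [this a, this b]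

lemma key2cat (S : ShortComplex (ModuleCat.{u} R)) (hS : S.ShortExact)
    (hI : Injective S.X₂) (F : ModuleCat.{u} R) (n : ℕ) (hn : 1 ≤ n) :
    (extV n F S.X₃ ↔ extV (n+1) F S.X₁) := by
  have := hS.mono_f
  have := hS.epi_g
  have P := CategoryTheory.ProjectiveResolution.of F
  let T : ShortComplex (HomologicalComplex (ModuleCat.{u} R) (ComplexShape.up ℕ)) :=
    ShortComplex.mk (yMap P.complex S.f) (yMap P.complex S.g) (by
      ext i (g : P.complex.X i ⟶ S.X₁)
      change (g ≫ S.f) ≫ S.g = _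
      rw [Category.assoc, S.zero, Limits.comp_zero]
      rfl)
  have hmid : ∀ m, 1 ≤ m → Subsingleton ((P.complex.linearYonedaObj R S.X₂).homology m : Type u) := by
    intro m hm
    obtain ⟨k, rfl⟩ : ∃ k, m = k + 1 := ⟨m - 1, by omega⟩
    have hex : (P.complex.linearYonedaObj R S.X₂).ExactAt (k+1) := by
      rw [HomologicalComplex.exactAt_iff' _ k (k+1) (k+2) (by simp) (by simp)]
      rw [ShortComplex.moduleCat_exact_iff]
      intro (x : P.complex.X (k+1) ⟶ S.X₂) hx
      have hx' : P.complex.d (k+1+1) (k+1) ≫ x = 0 := by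
        have h0 : (P.complex.linearYonedaObj R S.X₂).d (k+1) (k+1+1) x = 0 := hx
        exact h0
      refine ⟨(P.exact_succ k).descToInjective x (J := S.X₂) hx', ?_⟩
      change P.complex.d (k+1) k ≫ _ = x
      exact (P.exact_succ k).comp_descToInjective x hx'
    exact subsingleton_of_isZero
      ((HomologicalComplex.exactAt_iff_isZero_homology _ _).1 hex)
  -- degreewise short exactness
  have hT : T.ShortExact := by
    apply HomologicalComplex.shortExact_of_degreewise_shortExact
    intro i
    refine { exact := ?_, mono_f := ?_, epi_g := ?_ }
    · rw [ShortComplex.moduleCat_exact_iff]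
      intro (x : P.complex.X i ⟶ S.X₂) hx
      have hx' : x ≫ S.g = 0 := hx
      exact ⟨hS.exact.lift x hx', hS.exact.lift_f x hx'⟩
    · rw [ModuleCat.mono_iff_injective]
      intro (a : P.complex.X i ⟶ S.X₁) (b : P.complex.X i ⟶ S.X₁) hab
      exact (cancel_mono S.f).1 hab
    · rw [ModuleCat.epi_iff_surjective]
      intro (y : P.complex.X i ⟶ S.X₃)
      exact ⟨Projective.factorThru y S.g, Projective.factorThru_comp y S.g⟩
  have hrel : (ComplexShape.up ℕ).Rel n (n+1) := by simp
  constructor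
  · intro h3
    have h3' : Subsingleton ↑(HomologicalComplex.homology T.X₃ n) :=
      subsingleton_of_iso (P.isoExt n S.X₃).symm h3
    have hex := hT.homology_exact₁ n (n+1) hrel
    rw [ShortComplex.moduleCat_exact_iff] at hex
    refine subsingleton_of_iso (P.isoExt (n+1) S.X₁) ?_
    refine subsingleton_of_forall_eq 0 (fun x => ?_)
    have hx0 : HomologicalComplex.homologyMap T.f (n+1) x = 0 := by
      have := hmid (n+1) (by omega)
      exact Subsingleton.elim _ _
    obtain ⟨y, hy⟩ := hex x hx0
    have hy0 : y = 0 := Subsingleton.elim _ _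
    rw [hy0] at hy
    rw [← hy, map_zero]
  · intro h1
    have h1' : Subsingleton ↑(HomologicalComplex.homology T.X₁ (n+1)) :=
      subsingleton_of_iso (P.isoExt (n+1) S.X₁).symm h1
    have hex := hT.homology_exact₃ n (n+1) hrel
    rw [ShortComplex.moduleCat_exact_iff] at hex
    refine subsingleton_of_iso (P.isoExt n S.X₃) ?_
    refine subsingleton_of_forall_eq 0 (fun x => ?_)
    have hx0 : hT.δ n (n+1) hrel x = 0 := Subsingleton.elim _ _
    obtain ⟨y, hy⟩ := hex x hx0
    have hy0 : y = 0 := by have := hmid n hn; exact Subsingleton.elim _ _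
    rw [hy0] at hy
    rw [← hy, map_zero]

/-- The complex obtained by splicing `Q` with the middle term of `S`. -/
noncomputable def spliceComplex (S : ShortComplex (ModuleCat.{u} R))
    (Q : CategoryTheory.ProjectiveResolution S.X₁)
    (π0 : Q.complex.X 0 ⟶ S.X₁) (hπ0 : Q.complex.d 1 0 ≫ π0 = 0) :
    ChainComplex (ModuleCat.{u} R) ℕ :=
  Q.complex.augment (π0 ≫ S.f) (by rw [← Category.assoc, hπ0, Limits.zero_comp])

set_option maxHeartbeats 1000000 in
/-- Splicing a projective resolution of the kernel with a projective middle term. -/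
noncomputable def spliceRes (S : ShortComplex (ModuleCat.{u} R)) (hS : S.ShortExact)
    (hP : Projective S.X₂) (Q : CategoryTheory.ProjectiveResolution S.X₁)
    (π0 : Q.complex.X 0 ⟶ S.X₁) (hπ0 : Q.complex.d 1 0 ≫ π0 = 0) (hπ0f : π0 = Q.π.f 0) :
    CategoryTheory.ProjectiveResolution S.X₃ := by
  have := hS.mono_f
  have := hS.epi_g
  have hepi : Epi π0 := by
    rw [hπ0f]; have h : Epi (Q.π.f 0) := inferInstance; exact h
  have hsurj : Function.Surjective π0 := (ModuleCat.epi_iff_surjective π0).1 hepi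
  have hwzero : (π0 ≫ S.f) ≫ S.g = 0 := by
    rw [Category.assoc, S.zero, Limits.comp_zero]
  refine
  { complex := spliceComplex S Q π0 hπ0
    projective := fun n => by cases n with
      | zero => exact hP
      | succ m => exact Q.projective m
    π := (ChainComplex.toSingle₀Equiv _ S.X₃).symm ⟨S.g, by
      rw [show (spliceComplex S Q π0 hπ0).d 1 0 = π0 ≫ S.f from rfl]; exact hwzero⟩
    quasiIso := ⟨fun m => ?_⟩ }
  cases m with
  | zero =>
    rw [ChainComplex.quasiIsoAt₀_iff, ShortComplex.quasiIso_iff_of_zeros']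
    rotate_left
    · rfl
    · rfl
    · rfl
    refine (ShortComplex.exact_and_epi_g_iff_of_iso
      (S₂ := ShortComplex.mk (π0 ≫ S.f) S.g hwzero) ?_).2 ⟨?_, ?_⟩
    · exact ShortComplex.isoMk (Iso.refl _) (Iso.refl _) (Iso.refl _)
        (by simp; rfl) (by simp [ChainComplex.toSingle₀Equiv, HomologicalComplex.mkHomToSingle, HomologicalComplex.singleObjXIsoOfEq]; rfl)
    · -- exactness of  mk (π0 ≫ S.f) S.g
      rw [ShortComplex.moduleCat_exact_iff]
      intro (x : S.X₂) hx
      have hx' : S.g x = 0 := hx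
      have hex := hS.exact
      rw [ShortComplex.moduleCat_exact_iff] at hex
      obtain ⟨w, hw'⟩ := hex x hx'
      obtain ⟨y, hy⟩ := hsurj w
      refine ⟨y, ?_⟩
      show S.f (π0 y) = x
      rw [hy]; exact hw'
    · exact hS.epi_g
  | succ m =>
    rw [quasiIsoAt_iff_exactAt']
    · rw [HomologicalComplex.exactAt_iff' _ (m+2) (m+1) m (by simp) (by simp)]
      cases m with
      | zero =>
        rw [ShortComplex.moduleCat_exact_iff]
        intro (x : Q.complex.X 0) hx
        have hx' : S.f (π0 x) = 0 := hx
        have h0 : π0 x = 0 := by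
          have hinj := (ModuleCat.mono_iff_injective S.f).1 hS.mono_f
          apply hinj
          rw [hx', map_zero]
        have hQ := Q.exact₀
        rw [ShortComplex.moduleCat_exact_iff] at hQ
        exact hQ x (by rw [hπ0f] at h0; exact h0)
      | succ k =>
        exact Q.exact_succ k
    · apply ChainComplex.exactAt_succ_single_obj


attribute [local instance] ModuleCat.enoughInjectives

lemma key1cat (S : ShortComplex (ModuleCat.{u} R)) (hS : S.ShortExact)
    (hP : Projective S.X₂) (Y : ModuleCat.{u} R) (m : ℕ) :
    (extV (m+2) S.X₃ Y ↔ extV (m+1) S.X₁ Y) := by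
  have Q : CategoryTheory.ProjectiveResolution S.X₁ := CategoryTheory.ProjectiveResolution.of S.X₁
  have hπ0 : Q.complex.d 1 0 ≫ (Q.π.f 0 : Q.complex.X 0 ⟶ S.X₁) = 0 :=
    Q.complex_d_comp_π_f_zero
  let A : ChainComplex (ModuleCat.{u} R) ℕ := spliceComplex S Q (Q.π.f 0) hπ0
  let Res : CategoryTheory.ProjectiveResolution S.X₃ := spliceRes S hS hP Q (Q.π.f 0) hπ0 rfl
  let K := A.linearYonedaObj R Y
  let K' := Q.complex.linearYonedaObj R Y
  have hd : K.d (m+1) (m+2) = K'.d m (m+1) := by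
    ext (g : A.X (m+1) ⟶ Y)
    show A.d (m+2) (m+1) ≫ g = Q.complex.d (m+1) m ≫ g
    rw [show A.d (m+2) (m+1) = Q.complex.d (m+1) m from
      ChainComplex.augment_d_succ_succ _ _ _ (m+1) m]
    rfl
  have hd2 : K.d (m+2) (m+3) = K'.d (m+1) (m+2) := by
    ext (g : A.X (m+2) ⟶ Y)
    show A.d (m+3) (m+2) ≫ g = Q.complex.d (m+2) (m+1) ≫ g
    rw [show A.d (m+3) (m+2) = Q.complex.d (m+2) (m+1) from
      ChainComplex.augment_d_succ_succ _ _ _ (m+2) (m+1)]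
    rfl
  have e3 : K.sc' (m+1) (m+2) (m+3) ≅ K'.sc' m (m+1) (m+2) :=
    ShortComplex.isoMk (Iso.refl _) (Iso.refl _) (Iso.refl _)
      (by dsimp; exact (Category.id_comp _).trans (hd.symm.trans (Category.comp_id _).symm))
      (by dsimp; exact (Category.id_comp _).trans (hd2.symm.trans (Category.comp_id _).symm))
  have etot : ((Ext R (ModuleCat.{u} R) (m+2)).obj (Opposite.op S.X₃)).obj Y ≅
      ((Ext R (ModuleCat.{u} R) (m+1)).obj (Opposite.op S.X₁)).obj Y :=
    Res.isoExt (m+2) Y ≪≫ K.homologyIsoSc' (m+1) (m+2) (m+3) (by simp) (by simp) ≪≫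
      ShortComplex.homologyMapIso e3 ≪≫
      (K'.homologyIsoSc' m (m+1) (m+2) (by simp) (by simp)).symm ≪≫
      (Q.isoExt (m+1) Y).symm
  exact ⟨fun h => subsingleton_of_iso etot.symm h, fun h => subsingleton_of_iso etot h⟩


/-- Module-level contravariant dimension shifting. -/
lemma key1' (H P M : Type u) [AddCommGroup H] [Module R H] [AddCommGroup P] [Module R P]
    [AddCommGroup M] [Module R M] (i : H →ₗ[R] P) (p : P →ₗ[R] M)
    (hi : Function.Injective i) (hp : Function.Surjective p) (hip : Function.Exact i p)
    (hP : Module.Projective R P) (Y : Type u) [AddCommGroup Y] [Module R Y] (m : ℕ) :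
    extVanish R (m+2) M Y ↔ extVanish R (m+1) H Y := by
  let Scat : ShortComplex (ModuleCat.{u} R) :=
    ShortComplex.mk (ModuleCat.ofHom i) (ModuleCat.ofHom p) (by
      ext x
      exact hip.apply_apply_eq_zero x)
  have hScat : Scat.ShortExact :=
    { exact := (ShortComplex.moduleCat_exact_iff_range_eq_ker Scat).2
        (LinearMap.exact_iff.1 hip).symm
      mono_f := (ModuleCat.mono_iff_injective _).2 hi
      epi_g := (ModuleCat.epi_iff_surjective _).2 hp }
  exact key1cat Scat hScat ((IsProjective.iff_projective P).1 hP) (ModuleCat.of R Y) m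

/-- Module-level covariant dimension shifting along an injective embedding. -/
lemma key2' (C I D : Type u) [AddCommGroup C] [Module R C] [AddCommGroup I] [Module R I]
    [AddCommGroup D] [Module R D] (ι : C →ₗ[R] I) (q : I →ₗ[R] D)
    (hι : Function.Injective ι) (hq : Function.Surjective q) (hex : Function.Exact ι q)
    (hI : Injective (ModuleCat.of R I)) (F : Type u) [AddCommGroup F] [Module R F]
    (n : ℕ) (hn : 1 ≤ n) :
    extVanish R n F D ↔ extVanish R (n+1) F C := by
  let Scat : ShortComplex (ModuleCat.{u} R) :=
    ShortComplex.mk (ModuleCat.ofHom ι) (ModuleCat.ofHom q) (by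
      ext x
      exact hex.apply_apply_eq_zero x)
  have hScat : Scat.ShortExact :=
    { exact := (ShortComplex.moduleCat_exact_iff_range_eq_ker Scat).2
        (LinearMap.exact_iff.1 hex).symm
      mono_f := (ModuleCat.mono_iff_injective _).2 hι
      epi_g := (ModuleCat.epi_iff_surjective _).2 hq }
  exact key2cat Scat hScat hI (ModuleCat.of R F) n hn

end ExtVanishAux

open ExtVanishAux in
/-- If the first syzygy of `R_S` is `S`-strongly flat, then `Ext^n_R(F, C) = 0` for
every `S`-strongly flat `F`, every `S`-weakly cotorsion `C`, and every `n ≥ 1`. -/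
theorem ext_vanish_of_syzygy_stronglyFlat (S : Submonoid R) (H P : Type u)
    [AddCommGroup H] [Module R H] [AddCommGroup P] [Module R P]
    (i : H →ₗ[R] P) (p : P →ₗ[R] Localization S)
    (hi : Function.Injective i) (hp : Function.Surjective p) (hip : Function.Exact i p)
    (hP : Module.Projective R P) (hH : IsStronglyFlat R S H) :
    ∀ (n : ℕ), 1 ≤ n →
      ∀ (F C : Type u) [AddCommGroup F] [Module R F] [AddCommGroup C] [Module R C],
        IsStronglyFlat R S F → IsWeaklyCotorsion R S C → extVanish R n F C := by
  intro n hn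
  induction n, hn using Nat.le_induction with
  | base =>
    intro F C _ _ _ _ hF hC
    exact hF C hC
  | succ n hn ih =>
    intro F C _ _ _ _ hF hC
    -- embed C into an injective module and take the cokernel
    let Iobj : ModuleCat.{u} R := Injective.under (ModuleCat.of R C)
    let ι : C →ₗ[R] ↥Iobj := (Injective.ι (ModuleCat.of R C) : ModuleCat.of R C ⟶ Iobj).hom
    let Dmod : Type u := ↥Iobj ⧸ LinearMap.range ι
    have hιinj : Function.Injective ι :=
      (ModuleCat.mono_iff_injective (Injective.ι (ModuleCat.of R C))).1 inferInstance
    have hqsurj : Function.Surjective ((LinearMap.range ι).mkQ) :=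
      Submodule.mkQ_surjective _
    have hexact : Function.Exact ι ((LinearMap.range ι).mkQ) :=
      LinearMap.exact_iff.2 (Submodule.ker_mkQ _)
    have hIinj : Injective (ModuleCat.of R ↥Iobj) := by
      show Injective Iobj
      infer_instance
    -- the cosyzygy is weakly cotorsion
    have hD : IsWeaklyCotorsion R S Dmod := by
      show extVanish R 1 (Localization S) Dmod
      refine (key2' C (↥Iobj) Dmod ι ((LinearMap.range ι).mkQ) hιinj hqsurj hexact hIinj
        (Localization S) 1 le_rfl).2 ?_
      exact (key1' H P (Localization S) i p hi hp hip hP C 0).2 (hH C hC)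
    exact (key2' C (↥Iobj) Dmod ι ((LinearMap.range ι).mkQ) hιinj hqsurj hexact hIinj
      F n hn).1 (ih F Dmod hF hD)
end

section
/- For any R-module M, the projective dimension of M is at most the S-strongly flat dimension of M plus the projective dimension of R_S. -/
open CategoryTheory

universe u

variable (R : Type u) [CommRing R]

/-- `Tor^R_n(M, N) = 0`. -/
def torVanish (n : ℕ) (M N : Type u) [AddCommGroup M] [Module R M]
    [AddCommGroup N] [Module R N] : Prop :=
  Subsingleton (((Tor (ModuleCat.{u} R) n).obj (ModuleCat.of R M)).obj (ModuleCat.of R N))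

/-- The projective dimension of `M`: the smallest `n` with `Ext^{n+1}_R(M, -) = 0`,
or `∞` if there is no such `n`. -/
noncomputable def pdim (M : Type u) [AddCommGroup M] [Module R M] : ℕ∞ :=
  sInf {n : ℕ∞ | ∃ m : ℕ, n = m ∧
    ∀ (N : Type u) [AddCommGroup N] [Module R N], extVanish R (m + 1) M N}

/-- The flat dimension of `M`: the smallest `n` with `Tor^R_{n+1}(M, -) = 0`,
or `∞` if there is no such `n`. -/
noncomputable def fdim (M : Type u) [AddCommGroup M] [Module R M] : ℕ∞ :=
  sInf {n : ℕ∞ | ∃ m : ℕ, n = m ∧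
    ∀ (N : Type u) [AddCommGroup N] [Module R N], torVanish R (m + 1) M N}

/-- The `S`-strongly flat dimension of `M`: the smallest `n` with
`Ext^{n+1}_R(M, C) = 0` for every `S`-weakly cotorsion `C`, or `∞` otherwise. -/
noncomputable def sfdim (S : Submonoid R) (M : Type u) [AddCommGroup M] [Module R M] : ℕ∞ :=
  sInf {n : ℕ∞ | ∃ m : ℕ, n = m ∧
    ∀ (C : Type u) [AddCommGroup C] [Module R C],
      IsWeaklyCotorsion R S C → extVanish R (m + 1) M C}

namespace SfdAux

open Limits

variable {R}

/-- abbreviation for the Ext module -/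
noncomputable abbrev E (n : ℕ) (X Y : ModuleCat.{u} R) : ModuleCat.{u} R :=
  ((Ext R (ModuleCat.{u} R) n).obj (Opposite.op X)).obj Y

lemma subsingleton_of_isZero {M : ModuleCat.{u} R} (h : IsZero M) : Subsingleton M := by
  have h0 : (𝟙 M : M ⟶ M) = 0 := h.eq_of_src _ _
  refine ⟨fun a b => ?_⟩
  have : ∀ x : M, (𝟙 M : M ⟶ M) x = x := fun _ => rfl
  rw [← this a, ← this b, h0]
  rfl

lemma subsingleton_iff_isZero (M : ModuleCat.{u} R) : Subsingleton M ↔ IsZero M :=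
  ⟨fun h => ModuleCat.isZero_of_subsingleton M, subsingleton_of_isZero⟩

lemma isZero_X₂_of_exact (T : ShortComplex (ModuleCat.{u} R)) (hT : T.Exact)
    (h1 : IsZero T.X₁) (h3 : IsZero T.X₃) : IsZero T.X₂ := by
  rw [ShortComplex.moduleCat_exact_iff] at hT
  have h1' := subsingleton_of_isZero h1
  have h3' := subsingleton_of_isZero h3
  have key : ∀ x : T.X₂, x = 0 := by
    intro x
    obtain ⟨y, hy⟩ := hT x (Subsingleton.elim _ _)
    rw [← hy, Subsingleton.elim y 0, map_zero]
  have : Subsingleton T.X₂ := ⟨fun a b => by rw [key a, key b]⟩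
  exact ModuleCat.isZero_of_subsingleton _

/-- the map of Hom-complexes induced by `f : Y ⟶ Y'` -/
noncomputable def lyMap (P : ChainComplex (ModuleCat.{u} R) ℕ) {Y Y' : ModuleCat.{u} R}
    (f : Y ⟶ Y') : P.linearYonedaObj R Y ⟶ P.linearYonedaObj R Y' where
  f i := ModuleCat.ofHom (Linear.rightComp R (P.X i) f)
  comm' i j _ := by
    rw [ChainComplex.linearYonedaObj_d, ChainComplex.linearYonedaObj_d]
    ext φ
    revert φ
    intro (φ : P.X i ⟶ Y)
    show Linear.leftComp R Y' (P.d j i) ((Linear.rightComp R (P.X i) f) φ) =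
      Linear.rightComp R (P.X j) f ((Linear.leftComp R Y (P.d j i)) φ)
    rw [Linear.leftComp_apply, Linear.rightComp_apply, Linear.leftComp_apply,
      Linear.rightComp_apply, Category.assoc]

lemma lyMap_comp_zero (P : ChainComplex (ModuleCat.{u} R) ℕ)
    (S : ShortComplex (ModuleCat.{u} R)) :
    lyMap P S.f ≫ lyMap P S.g = 0 := by
  ext i φ
  revert φ
  intro (φ : P.X i ⟶ S.X₁)
  show (φ ≫ S.f) ≫ S.g = (0 : P.X i ⟶ S.X₃)
  rw [Category.assoc, S.zero, comp_zero]

lemma lySES (P : ChainComplex (ModuleCat.{u} R) ℕ) (hproj : ∀ i, Projective (P.X i))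
    (S : ShortComplex (ModuleCat.{u} R)) (hS : S.ShortExact) :
    (ShortComplex.mk (lyMap P S.f) (lyMap P S.g) (lyMap_comp_zero P S)).ShortExact := by
  have := hS.mono_f
  have := hS.epi_g
  refine HomologicalComplex.shortExact_of_degreewise_shortExact _ (fun i => ShortComplex.ShortExact.mk' ?_ ?_ ?_)
  case _ =>
    rw [ShortComplex.moduleCat_exact_iff]
    intro (x₂ : P.X i ⟶ S.X₂) hx₂
    change x₂ ≫ S.g = 0 at hx₂
    exact ⟨hS.exact.lift x₂ hx₂, hS.exact.lift_f x₂ hx₂⟩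
  case _ =>
    rw [ModuleCat.mono_iff_injective]
    intro (a : P.X i ⟶ S.X₁) (b : P.X i ⟶ S.X₁) hab
    change a ≫ S.f = b ≫ S.f at hab
    rwa [cancel_mono S.f] at hab
  case _ =>
    rw [ModuleCat.epi_iff_surjective]
    intro (ψ : P.X i ⟶ S.X₃)
    have := hproj i
    exact ⟨Projective.factorThru ψ S.g, show Projective.factorThru ψ S.g ≫ S.g = ψ from Projective.factorThru_comp ψ S.g⟩

lemma isZero_homology_ly_injective {X : ModuleCat.{u} R} (P : ProjectiveResolution X)
    (I : ModuleCat.{u} R) [Injective I] (n : ℕ) :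
    IsZero ((P.complex.linearYonedaObj R I).homology (n + 1)) := by
  rw [← HomologicalComplex.exactAt_iff_isZero_homology,
    HomologicalComplex.exactAt_iff' _ n (n + 1) (n + 2) (by simp) (by simp),
    ShortComplex.moduleCat_exact_iff]
  intro (φ : P.complex.X (n + 1) ⟶ I) hφ
  change P.complex.d (n + 2) (n + 1) ≫ φ = 0 at hφ
  -- exactness of the projective resolution at n+1
  have hex := P.complex_exactAt_succ n
  rw [HomologicalComplex.exactAt_iff' _ (n + 2) (n + 1) n (by simp) (by simp),
    ShortComplex.moduleCat_exact_iff] at hex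
  set d1 : P.complex.X (n + 1) ⟶ P.complex.X n := P.complex.d (n + 1) n with hd1
  have hle : LinearMap.ker d1.hom ≤ LinearMap.ker φ.hom := by
    intro x hx
    obtain ⟨y, hy⟩ := hex x hx
    have : φ x = (P.complex.d (n + 2) (n + 1) ≫ φ) y := by
      rw [← hy]; rfl
    rw [hφ] at this
    exact this
  let e := LinearMap.quotKerEquivRange d1.hom
  let g0 : ModuleCat.of R ↥(LinearMap.range d1.hom) ⟶ I :=
    ModuleCat.ofHom ((Submodule.liftQ _ φ.hom hle).comp (e.symm : _ →ₗ[R] _))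
  let ι : ModuleCat.of R ↥(LinearMap.range d1.hom) ⟶ P.complex.X n :=
    ModuleCat.ofHom (LinearMap.range d1.hom).subtype
  have : Mono ι := (ModuleCat.mono_iff_injective ι).mpr (Subtype.val_injective)
  refine ⟨Injective.factorThru g0 ι, ?_⟩
  show d1 ≫ Injective.factorThru g0 ι = φ
  ext x
  have h1 : (Injective.factorThru g0 ι) (d1 x) = g0 ⟨d1 x, ⟨x, rfl⟩⟩ := by
    have := Injective.comp_factorThru g0 ι
    calc (Injective.factorThru g0 ι) (d1 x)
        = (ι ≫ Injective.factorThru g0 ι) ⟨d1 x, ⟨x, rfl⟩⟩ := rfl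
      _ = g0 ⟨d1 x, ⟨x, rfl⟩⟩ := by rw [this]
  have h2 : e (Submodule.Quotient.mk x) = ⟨d1 x, ⟨x, rfl⟩⟩ :=
    Subtype.ext (LinearMap.quotKerEquivRange_apply_mk _ x)
  have h3 : g0 ⟨d1 x, ⟨x, rfl⟩⟩ = φ x := by
    show (Submodule.liftQ _ φ.hom hle) (e.symm ⟨d1 x, ⟨x, rfl⟩⟩) = φ x
    rw [← h2, e.symm_apply_apply]
    exact Submodule.liftQ_apply _ _ x
  show (Injective.factorThru g0 ι) (d1 x) = φ x
  rw [h1, h3]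

lemma subsingleton_ext_injective (X I : ModuleCat.{u} R) [Injective I] (n : ℕ) :
    Subsingleton (E (n + 1) X I) := by
  have P : ProjectiveResolution X := (HasProjectiveResolution.out (Z := X)).some
  have iso := P.isoExt (R := R) (n + 1) I
  exact subsingleton_of_isZero ((isZero_homology_ly_injective P I n).of_iso iso)

lemma ext_shift (X : ModuleCat.{u} R) (S : ShortComplex (ModuleCat.{u} R))
    (hS : S.ShortExact) [Injective S.X₂] (n : ℕ) :
    Subsingleton (E (n + 2) X S.X₁) ↔ Subsingleton (E (n + 1) X S.X₃) := by
  have P : ProjectiveResolution X := (HasProjectiveResolution.out (Z := X)).some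
  have hproj : ∀ i, Projective (P.complex.X i) := P.projective
  set SC : ShortComplex (CochainComplex (ModuleCat.{u} R) ℕ) :=
    ShortComplex.mk (lyMap P.complex S.f) (lyMap P.complex S.g)
      (lyMap_comp_zero P.complex S) with hSC
  have hSE := lySES P.complex hproj S hS
  have e1 := P.isoExt (R := R) (n + 2) S.X₁
  have e3 := P.isoExt (R := R) (n + 1) S.X₃
  rw [subsingleton_iff_isZero, subsingleton_iff_isZero, e1.isZero_iff, e3.isZero_iff]
  have hrel : (ComplexShape.up ℕ).Rel (n + 1) (n + 2) := rfl
  have hI2 : IsZero (SC.X₂.homology (n + 2)) := isZero_homology_ly_injective P S.X₂ (n + 1)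
  have hI1 : IsZero (SC.X₂.homology (n + 1)) := isZero_homology_ly_injective P S.X₂ n
  constructor
  · intro h1
    exact isZero_X₂_of_exact _ (hSE.homology_exact₃ (n + 1) (n + 2) hrel) hI1 h1
  · intro h3
    exact isZero_X₂_of_exact _ (hSE.homology_exact₁ (n + 1) (n + 2) hrel) h3 hI2

/-- the cosyzygy short exact sequence of `N` -/
noncomputable def cosyz (N : ModuleCat.{u} R) : ShortComplex (ModuleCat.{u} R) :=
  ShortComplex.mk (Injective.ι N) (cokernel.π (Injective.ι N)) (cokernel.condition _)

lemma cosyz_shortExact (N : ModuleCat.{u} R) : (cosyz N).ShortExact where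
  exact := ShortComplex.exact_of_g_is_cokernel _ (cokernelIsCokernel _)
  mono_f := by dsimp [cosyz]; infer_instance
  epi_g := by dsimp [cosyz]; infer_instance

instance (N : ModuleCat.{u} R) : Injective ((cosyz N).X₂) := by
  dsimp [cosyz]; infer_instance

lemma key (M RS : ModuleCat.{u} R) (s : ℕ)
    (hs : ∀ C : ModuleCat.{u} R, Subsingleton (E 1 RS C) → Subsingleton (E (s + 1) M C)) :
    ∀ (p : ℕ) (N : ModuleCat.{u} R),
      Subsingleton (E (p + 1) RS N) → Subsingleton (E (s + p + 1) M N) := by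
  intro p
  induction p with
  | zero => exact fun N hN => hs N hN
  | succ p ih =>
    intro N hN
    have hΩ : Subsingleton (E (p + 1) RS ((cosyz N).X₃)) :=
      (ext_shift RS (cosyz N) (cosyz_shortExact N) p).mp hN
    have hM : Subsingleton (E (s + p + 1) M ((cosyz N).X₃)) := ih _ hΩ
    exact (ext_shift M (cosyz N) (cosyz_shortExact N) (s + p)).mpr hM

end SfdAux

/-- `pd_R(M) ≤ S-sfd(M) + pd_R(R_S)` for any `R`-module `M`. -/
theorem pdim_le_sfdim_add_pdim_localization (S : Submonoid R)
    (M : Type u) [AddCommGroup M] [Module R M] :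
    pdim R M ≤ sfdim R S M + pdim R (Localization S) := by
  by_cases hA : sfdim R S M = ⊤
  · rw [hA, top_add]; exact le_top
  by_cases hB : pdim R (Localization S) = ⊤
  · rw [hB, add_top]; exact le_top
  set SA : Set ℕ∞ := {n : ℕ∞ | ∃ m : ℕ, n = m ∧
    ∀ (C : Type u) [AddCommGroup C] [Module R C],
      IsWeaklyCotorsion R S C → extVanish R (m + 1) M C} with hSA
  set SB : Set ℕ∞ := {n : ℕ∞ | ∃ m : ℕ, n = m ∧
    ∀ (N : Type u) [AddCommGroup N] [Module R N],
      extVanish R (m + 1) (Localization S) N} with hSB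
  have hdefA : sfdim R S M = sInf SA := rfl
  have hdefB : pdim R (Localization S) = sInf SB := rfl
  have hAne : SA.Nonempty := by
    rw [Set.nonempty_iff_ne_empty]
    intro h
    exact hA (by rw [hdefA, h, sInf_empty])
  have hBne : SB.Nonempty := by
    rw [Set.nonempty_iff_ne_empty]
    intro h
    exact hB (by rw [hdefB, h, sInf_empty])
  obtain ⟨ms, hms, hPs⟩ := csInf_mem hAne
  obtain ⟨mp, hmp, hPp⟩ := csInf_mem hBne
  have hvan : ∀ (N : Type u) [AddCommGroup N] [Module R N],
      extVanish R (ms + mp + 1) M N := by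
    intro N _ _
    exact SfdAux.key (ModuleCat.of R M) (ModuleCat.of R (Localization S)) ms
      (fun C hC => hPs (↑C) hC) mp (ModuleCat.of R N) (hPp N)
  have hle : pdim R M ≤ ((ms + mp : ℕ) : ℕ∞) :=
    sInf_le ⟨ms + mp, rfl, hvan⟩
  have heq : sfdim R S M + pdim R (Localization S) = ((ms + mp : ℕ) : ℕ∞) := by
    rw [hdefA, hdefB, hms, hmp, Nat.cast_add]
  rw [heq]
  exact hle
end

section
/- If R_S is projective as an R-module, then the global S-strongly flat dimension of R equals the global (projective) dimension of R. -/
open CategoryTheory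

universe u

variable (R : Type u) [CommRing R]

lemma all_weakly_cotorsion (S : Submonoid R) (h : Module.Projective R (Localization S))
    (C : Type u) [AddCommGroup C] [Module R C] : IsWeaklyCotorsion R S C := by
  have hp : Projective (ModuleCat.of R (Localization S)) :=
    (IsProjective.iff_projective (R := R) (Localization S)).mp h
  have := isZero_Ext_succ_of_projective (R := R)
    (ModuleCat.of R (Localization S)) (ModuleCat.of R C) 0
  have hid := (Limits.IsZero.iff_id_eq_zero _).mp this
  have h0 : ∀ x : (((Ext R (ModuleCat.{u} R) (0 + 1)).obj
      (Opposite.op (ModuleCat.of R (Localization S)))).obj (ModuleCat.of R C)), x = 0 := by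
    intro x
    calc x = (𝟙 (((Ext R (ModuleCat.{u} R) (0 + 1)).obj
          (Opposite.op (ModuleCat.of R (Localization S)))).obj (ModuleCat.of R C))) x := rfl
      _ = 0 := by rw [hid]; rfl
  exact ⟨fun a b => (h0 a).trans (h0 b).symm⟩

/-- If `R_S` is projective as an `R`-module, then the global `S`-strongly flat
dimension of `R` (the supremum of `S-sfd(M)` over all `R`-modules `M`) equals the
global dimension of `R`. -/
theorem glsfdim_eq_gldim (S : Submonoid R) (h : Module.Projective R (Localization S)) :
    sInf {n : ℕ∞ | ∀ (M : Type u) [AddCommGroup M] [Module R M], sfdim R S M ≤ n}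
      = sInf {n : ℕ∞ | ∀ (M : Type u) [AddCommGroup M] [Module R M], pdim R M ≤ n} := by
  have key : ∀ (M : Type u) [AddCommGroup M] [Module R M], sfdim R S M = pdim R M := by
    intro M _ _
    unfold sfdim pdim
    congr 1
    ext n
    constructor
    · rintro ⟨m, rfl, hm⟩
      exact ⟨m, rfl, fun N _ _ => hm N (all_weakly_cotorsion R S h N)⟩
    · rintro ⟨m, rfl, hm⟩
      exact ⟨m, rfl, fun C _ _ _ => hm C⟩
  congr 1
  ext n
  constructor <;> intro hn M _ _
  · rw [← key M]; exact hn M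
  · rw [key M]; exact hn M
end

section
/- Suppose the first syzygy of R_S is S-strongly flat and n ≥ 0. If every cyclic R-module has S-strongly flat dimension at most n, then every R-module has S-strongly flat dimension at most n. -/
open CategoryTheory

universe u

variable (R : Type u) [CommRing R]

section SFDDev
open CategoryTheory Limits
variable {R}

lemma subsingleton_iff_isZero (M : ModuleCat.{u} R) : Subsingleton M ↔ IsZero M := by
  constructor
  · intro h; exact M.isZero_of_subsingleton
  · intro h
    have hid : (𝟙 M : M ⟶ M) = 0 := h.eq_of_src _ _
    have za : ∀ x : M, x = 0 := fun x => by
      calc x = (𝟙 M : M ⟶ M) x := rfl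
      _ = (0 : M ⟶ M) x := by rw [hid]
      _ = 0 := rfl
    exact ⟨fun a b => by rw [za a, za b]⟩

structure ConcRes (X₀ : ModuleCat.{u} R) where
  complex : ChainComplex (ModuleCat.{u} R) ℕ
  projective : ∀ n, Projective (complex.X n)
  e : complex.X 0 ⟶ X₀
  he : Function.Surjective e
  hde : complex.d 1 0 ≫ e = 0
  hex0 : ∀ x : complex.X 0, e x = 0 → ∃ y, complex.d 1 0 y = x
  hexs : ∀ n, ∀ x : complex.X (n+1), complex.d (n+1) n x = 0 →
    ∃ y, complex.d (n+2) (n+1) y = x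

attribute [instance] ConcRes.projective

noncomputable def ConcRes.toProjRes {X₀ : ModuleCat.{u} R} (C : ConcRes X₀) :
    ProjectiveResolution X₀ where
  complex := C.complex
  projective := C.projective
  π := (ChainComplex.toSingle₀Equiv _ _).symm ⟨C.e, C.hde⟩
  quasiIso := ⟨fun n => by
    cases n with
    | zero =>
      rw [ChainComplex.quasiIsoAt₀_iff, ShortComplex.quasiIso_iff_of_zeros']
      · refine (ShortComplex.exact_and_epi_g_iff_of_iso
          (ShortComplex.isoMk (Iso.refl _) (Iso.refl _) (Iso.refl _)
            (by simp; exact (Category.id_comp _).trans (Category.comp_id _).symm)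
            (by simp [ChainComplex.toSingle₀Equiv_symm_apply_f_zero]; exact (Category.id_comp _).trans (Category.comp_id _).symm))).2
          ⟨?_, (ModuleCat.epi_iff_surjective _).2 C.he⟩
        rw [ShortComplex.moduleCat_exact_iff]
        exact C.hex0
      · exact C.complex.shape 0 0 (by simp)
      · rfl
      · rfl
    | succ n =>
      rw [quasiIsoAt_iff_exactAt']
      · rw [HomologicalComplex.exactAt_iff' _ (n+1+1) (n+1) n (by simp) (by simp)]
        rw [ShortComplex.moduleCat_exact_iff]
        exact C.hexs n
      · apply ChainComplex.exactAt_succ_single_obj⟩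

/-- concrete vanishing statement -/
def EVc {X₀ : ModuleCat.{u} R} (C : ConcRes X₀) (k : ℕ) (Y : ModuleCat.{u} R) : Prop :=
  ∀ ψ : C.complex.X (k+1) ⟶ Y, C.complex.d (k+2) (k+1) ≫ ψ = 0 →
      ∃ φ : C.complex.X k ⟶ Y, C.complex.d (k+1) k ≫ φ = ψ

lemma ev_iff {X₀ : ModuleCat.{u} R} (C : ConcRes X₀) (k : ℕ) (Y : ModuleCat.{u} R) :
    Subsingleton (((Ext R (ModuleCat.{u} R) (k+1)).obj (Opposite.op X₀)).obj Y) ↔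
      EVc C k Y := by
  rw [subsingleton_iff_isZero, (C.toProjRes.isoExt (k+1) Y).isZero_iff,
    ← HomologicalComplex.exactAt_iff_isZero_homology,
    HomologicalComplex.exactAt_iff' _ k (k+1) (k+2) (by simp) (by simp),
    ShortComplex.moduleCat_exact_iff]
  exact Iff.rfl

noncomputable def ConcRes.ofRes {X₀ : ModuleCat.{u} R} (P : ProjectiveResolution X₀) :
    ConcRes X₀ where
  complex := P.complex
  projective := P.projective
  e := P.π.f 0
  he := (ModuleCat.epi_iff_surjective (P.π.f 0 : P.complex.X 0 ⟶ X₀)).1 inferInstance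
  hde := P.complex_d_comp_π_f_zero
  hex0 := (ShortComplex.moduleCat_exact_iff _).1 P.exact₀
  hexs := fun n => (ShortComplex.moduleCat_exact_iff _).1 (P.exact_succ n)

lemma factorThruA {A E D P : ModuleCat.{u} R} (f : A ⟶ E) (g : E ⟶ D)
    (hf : Function.Injective f) (hfg : Function.Exact f g)
    (ψ : P ⟶ E) (hψ : ψ ≫ g = 0) :
    ∃ χ : P ⟶ A, χ ≫ f = ψ := by
  have hmem : ∀ x : P, ψ x ∈ LinearMap.range f.hom := by
    intro x
    have h0 : g (ψ x) = 0 := by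
      have := congr_fun (congr_arg (fun (h : P ⟶ D) => (h : P → D)) hψ) x
      simpa using this
    rcases (hfg (ψ x)).1 h0 with ⟨a, ha⟩
    exact ⟨a, ha⟩
  let eA := LinearEquiv.ofInjective f.hom hf
  refine ⟨ModuleCat.ofHom (eA.symm.toLinearMap ∘ₗ
    (LinearMap.codRestrict (LinearMap.range f.hom) ψ.hom hmem)), ?_⟩
  ext x
  show f (eA.symm ⟨ψ x, hmem x⟩) = ψ x
  exact congr_arg Subtype.val (eA.apply_symm_apply ⟨ψ x, hmem x⟩)

lemma fg_zero {A E D : ModuleCat.{u} R} (f : A ⟶ E) (g : E ⟶ D)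
    (hfg : Function.Exact f g) : f ≫ g = 0 := by
  ext x
  exact hfg.apply_apply_eq_zero x


lemma chase2 {M : ModuleCat.{u} R} (C : ConcRes M) {A E D : ModuleCat.{u} R}
    (f : A ⟶ E) (g : E ⟶ D) (hf : Function.Injective f) (hg : Function.Surjective g)
    (hfg : Function.Exact f g) (j : ℕ)
    (hD : EVc C j D) (hE : EVc C (j+1) E) : EVc C (j+1) A := by
  haveI : Epi g := (ModuleCat.epi_iff_surjective g).2 hg
  haveI : Mono f := (ModuleCat.mono_iff_injective f).2 hf
  intro χ hχ
  obtain ⟨ψ, hψ⟩ := hE (χ ≫ f) (by rw [← Category.assoc, hχ, Limits.zero_comp])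
  have hψ' : C.complex.d (j+2) (j+1) ≫ ψ = χ ≫ f := hψ
  obtain ⟨φ, hφ⟩ := hD (ψ ≫ g)
    (by rw [← Category.assoc, hψ', Category.assoc, fg_zero f g hfg, Limits.comp_zero])
  obtain ⟨φ', hφ'⟩ := Projective.factors φ g
  obtain ⟨θ, hθ⟩ := factorThruA f g hf hfg (ψ - C.complex.d (j+1) j ≫ φ')
    (by rw [Preadditive.sub_comp, Category.assoc, hφ', hφ, sub_self])
  refine ⟨θ, ?_⟩
  show C.complex.d (j+2) (j+1) ≫ θ = χ
  rw [← cancel_mono f, Category.assoc, hθ, Preadditive.comp_sub, hψ',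
    ← Category.assoc, HomologicalComplex.d_comp_d, Limits.zero_comp, sub_zero]

lemma chase3 {M : ModuleCat.{u} R} (C : ConcRes M) {A E D : ModuleCat.{u} R}
    (f : A ⟶ E) (g : E ⟶ D) (hf : Function.Injective f) (hg : Function.Surjective g)
    (hfg : Function.Exact f g) (j : ℕ)
    (hA : EVc C (j+1) A) (hE : EVc C j E) : EVc C j D := by
  haveI : Epi g := (ModuleCat.epi_iff_surjective g).2 hg
  haveI : Mono f := (ModuleCat.mono_iff_injective f).2 hf
  intro φ hφ
  obtain ⟨ψ, hψ⟩ := Projective.factors φ g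
  obtain ⟨χ, hχ⟩ := factorThruA f g hf hfg (C.complex.d (j+2) (j+1) ≫ ψ)
    (by rw [Category.assoc, hψ, hφ])
  have hχc : C.complex.d (j+1+2) (j+1+1) ≫ χ = 0 := by
    show C.complex.d (j+3) (j+2) ≫ χ = 0
    rw [← cancel_mono f, Category.assoc, hχ, ← Category.assoc,
      HomologicalComplex.d_comp_d, Limits.zero_comp, Limits.zero_comp]
  obtain ⟨θ, hθ⟩ := hA χ hχc
  have hθ' : C.complex.d (j+2) (j+1) ≫ θ = χ := hθ
  obtain ⟨η, hη⟩ := hE (ψ - θ ≫ f)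
    (by rw [Preadditive.comp_sub, ← Category.assoc, hθ', hχ, sub_self])
  refine ⟨η ≫ g, ?_⟩
  rw [← Category.assoc, hη, Preadditive.sub_comp, Category.assoc, fg_zero f g hfg,
    Limits.comp_zero, sub_zero, hψ]

/-- extension property along arbitrary injections -/
def InjProp (Y : ModuleCat.{u} R) : Prop :=
  ∀ (A B : ModuleCat.{u} R) (h : A ⟶ B), Function.Injective h →
    ∀ f : A ⟶ Y, ∃ gg : B ⟶ Y, h ≫ gg = f

lemma evc_of_injProp {M : ModuleCat.{u} R} (C : ConcRes M) {Y : ModuleCat.{u} R}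
    (hY : InjProp Y) (k : ℕ) : EVc C k Y := by
  intro ψ hψ
  set d0 : C.complex.X (k+1) →ₗ[R] C.complex.X k := (C.complex.d (k+1) k).hom with hd0
  have hker : LinearMap.ker d0 ≤ LinearMap.ker ψ.hom := by
    intro x hx
    obtain ⟨y, hy⟩ := C.hexs k x hx
    have : ψ (C.complex.d (k+2) (k+1) y) = 0 := by
      have := congr_fun (congr_arg (fun (h : C.complex.X (k+2) ⟶ Y) => (h : _ → _)) hψ) y
      simpa using this
    simpa [hy] using this
  let q := LinearMap.quotKerEquivRange d0
  let fbar : ↥(LinearMap.range d0) →ₗ[R] Y :=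
    (Submodule.liftQ (LinearMap.ker d0) ψ.hom hker) ∘ₗ
      q.symm.toLinearMap
  obtain ⟨φ, hφ⟩ := hY (ModuleCat.of R ↥(LinearMap.range d0)) (C.complex.X k)
    (ModuleCat.ofHom ((LinearMap.range d0).subtype))
    (Submodule.injective_subtype _) (ModuleCat.ofHom fbar)
  refine ⟨φ, ?_⟩
  ext x
  have h1 : (⟨d0 x, LinearMap.mem_range_self d0 x⟩ : ↥(LinearMap.range d0)) =
      q (Submodule.Quotient.mk x) := by
    apply Subtype.ext
    rfl
  have h2 : φ ((LinearMap.range d0).subtype ⟨d0 x, LinearMap.mem_range_self d0 x⟩) =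
      fbar ⟨d0 x, LinearMap.mem_range_self d0 x⟩ := by
    have := congr_fun (congr_arg (fun (h : _ ⟶ Y) => (h : _ → _)) hφ)
      (⟨d0 x, LinearMap.mem_range_self d0 x⟩ : ↥(LinearMap.range d0))
    simpa using this
  show φ (d0 x) = ψ x
  have h3 : fbar ⟨d0 x, LinearMap.mem_range_self d0 x⟩ = ψ x := by
    rw [show (⟨d0 x, LinearMap.mem_range_self d0 x⟩ : ↥(LinearMap.range d0)) =
      q (Submodule.Quotient.mk x) from h1]
    show (Submodule.liftQ _ _ hker) (q.symm (q (Submodule.Quotient.mk x))) = ψ x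
    rw [q.symm_apply_apply]
    rfl
  rw [← h3, ← h2]
  rfl


section Splice
variable {K' P' X' : ModuleCat.{u} R} (C : ConcRes K') (i : K' ⟶ P') (pp : P' ⟶ X')
  (hi : Function.Injective i) (hp : Function.Surjective pp) (hip : Function.Exact i pp)
  [Projective P']

/-- the spliced complex -/
noncomputable def spliceComplex : ChainComplex (ModuleCat.{u} R) ℕ :=
  ChainComplex.of
    (fun n => match n with | 0 => P' | (n+1) => C.complex.X n)
    (fun n => match n with | 0 => C.e ≫ i | (n+1) => C.complex.d (n+1) n)
    (fun n => match n with
      | 0 => by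
        show C.complex.d 1 0 ≫ (C.e ≫ i) = 0
        rw [← Category.assoc, C.hde, Limits.zero_comp]
      | (n+1) => C.complex.d_comp_d _ _ _)

lemma spliceComplex_d_zero : (spliceComplex C i).d 1 0 = C.e ≫ i :=
  by unfold spliceComplex; dsimp only; exact ChainComplex.of_d _ _ 0

lemma spliceComplex_d_succ (n : ℕ) :
    (spliceComplex C i).d (n+2) (n+1) = C.complex.d (n+1) n :=
  by unfold spliceComplex; dsimp only; exact ChainComplex.of_d _ _ (n+1)

noncomputable def ConcRes.splice : ConcRes X' where
  complex := spliceComplex C i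
  projective := fun n => match n with
    | 0 => ‹Projective P'›
    | (n+1) => C.projective n
  e := pp
  he := hp
  hde := by
    rw [spliceComplex_d_zero]
    show (C.e ≫ i) ≫ pp = 0
    rw [Category.assoc, fg_zero i pp hip, Limits.comp_zero]
  hex0 := by
    intro x hx
    obtain ⟨a, ha⟩ := (hip x).1 hx
    obtain ⟨y, hy⟩ := C.he a
    refine ⟨y, ?_⟩
    rw [spliceComplex_d_zero]
    show i (C.e y) = x
    rw [hy, ha]
  hexs := by
    intro n
    match n with
    | 0 =>
      intro x hx
      rw [spliceComplex_d_zero] at hx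
      have hx' : i (C.e x) = 0 := hx
      have : C.e x = 0 := by
        apply hi
        simpa using hx'
      obtain ⟨y, hy⟩ := C.hex0 x this
      refine ⟨y, ?_⟩
      rw [spliceComplex_d_succ]
      exact hy
    | (n+1) =>
      intro x hx
      rw [spliceComplex_d_succ] at hx
      obtain ⟨y, hy⟩ := C.hexs n x hx
      refine ⟨y, ?_⟩
      rw [spliceComplex_d_succ]
      exact hy

lemma evc_splice_succ (k : ℕ) (Y : ModuleCat.{u} R) :
    EVc (C.splice i pp hi hp hip) (k+1) Y ↔ EVc C k Y := by
  constructor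
  · intro h ψ hψ
    obtain ⟨φ, hφ⟩ := h ψ (by
      show (spliceComplex C i).d (k+3) (k+2) ≫ ψ = 0
      rw [spliceComplex_d_succ]
      exact hψ)
    refine ⟨φ, ?_⟩
    have : (spliceComplex C i).d (k+2) (k+1) ≫ φ = ψ := hφ
    rw [spliceComplex_d_succ] at this
    exact this
  · intro h ψ hψ
    have hψ' : C.complex.d (k+2) (k+1) ≫ ψ = 0 := by
      have : (spliceComplex C i).d (k+3) (k+2) ≫ ψ = 0 := hψ
      rw [spliceComplex_d_succ] at this
      exact this
    obtain ⟨φ, hφ⟩ := h ψ hψ'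
    refine ⟨φ, ?_⟩
    show (spliceComplex C i).d (k+2) (k+1) ≫ φ = ψ
    rw [spliceComplex_d_succ]
    exact hφ

/-- Baer-type consequence of `Ext¹(X', Y) = 0`. -/
lemma baer_of_evc (Y : ModuleCat.{u} R) (h : EVc (C.splice i pp hi hp hip) 0 Y)
    (f : K' ⟶ Y) : ∃ gg : P' ⟶ Y, i ≫ gg = f := by
  obtain ⟨φ, hφ⟩ := h (C.e ≫ f) (by
    show (spliceComplex C i).d 2 1 ≫ (C.e ≫ f) = 0
    rw [spliceComplex_d_succ]
    show C.complex.d 1 0 ≫ C.e ≫ f = 0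
    rw [← Category.assoc, C.hde, Limits.zero_comp])
  have hφ' : (spliceComplex C i).d 1 0 ≫ φ = C.e ≫ f := hφ
  rw [spliceComplex_d_zero] at hφ'
  have hφ'' : C.e ≫ i ≫ φ = C.e ≫ f := (Category.assoc C.e i φ).symm.trans hφ'
  refine ⟨φ, ?_⟩
  haveI : Epi C.e := (ModuleCat.epi_iff_surjective _).2 C.he
  exact (cancel_epi C.e).1 hφ''

end Splice

lemma injProp_of_injective (Y : ModuleCat.{u} R) [Injective Y] : InjProp Y := by
  intro A B h hinj f
  haveI : Mono h := (ModuleCat.mono_iff_injective h).2 hinj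
  exact Injective.factors f h

lemma injProp_of_moduleInjective (Y : ModuleCat.{u} R) (h : Module.Injective R ↥Y) :
    InjProp Y := by
  intro A B hAB hinj f
  obtain ⟨g', hg'⟩ := h.out hAB.hom hinj f.hom
  refine ⟨ModuleCat.ofHom g', ?_⟩
  ext x
  exact hg' x

/-- cosyzygy data -/
lemma cosyzygy (Y : ModuleCat.{u} R) :
    ∃ (E D : ModuleCat.{u} R) (f : Y ⟶ E) (g : E ⟶ D), InjProp E ∧
      Function.Injective f ∧ Function.Surjective g ∧ Function.Exact f g := by
  let E := Injective.under Y
  let f : Y ⟶ E := Injective.ι Y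
  let D := ModuleCat.of R (↥E ⧸ LinearMap.range f.hom)
  refine ⟨E, D, f, ModuleCat.ofHom (LinearMap.range f.hom).mkQ,
    injProp_of_injective E, ?_, Submodule.mkQ_surjective _,
    LinearMap.exact_map_mkQ_range f.hom⟩
  exact (ModuleCat.mono_iff_injective (Injective.ι Y)).1 inferInstance

lemma quotient_cyclic (I : Ideal R) : ∃ x : R ⧸ I, Submodule.span R {x} = ⊤ := by
  refine ⟨Submodule.Quotient.mk 1, ?_⟩
  rw [Submodule.eq_top_iff']
  intro y
  obtain ⟨r, rfl⟩ := Submodule.mkQ_surjective I y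
  rw [Submodule.mem_span_singleton]
  exact ⟨r, by rw [← Submodule.Quotient.mk_smul, smul_eq_mul, mul_one]; rfl⟩

end SFDDev

/-- Suppose the first syzygy of `R_S` is `S`-strongly flat. If every cyclic `R`-module
has `S`-strongly flat dimension at most `n`, then every `R`-module has `S`-strongly
flat dimension at most `n`. -/
theorem sfdim_le_of_cyclic (S : Submonoid R) (H P : Type u)
    [AddCommGroup H] [Module R H] [AddCommGroup P] [Module R P]
    (i : H →ₗ[R] P) (p : P →ₗ[R] Localization S)
    (hi : Function.Injective i) (hp : Function.Surjective p) (hip : Function.Exact i p)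
    (hP : Module.Projective R P) (hH : IsStronglyFlat R S H) (n : ℕ)
    (hcyc : ∀ (M : Type u) [AddCommGroup M] [Module R M],
      (∃ x : M, Submodule.span R {x} = ⊤) → sfdim R S M ≤ n) :
    ∀ (M : Type u) [AddCommGroup M] [Module R M], sfdim R S M ≤ n := by
  classical
  -- setup
  let RSobj : ModuleCat.{u} R := ModuleCat.of R (Localization S)
  let CRS : ConcRes RSobj := ConcRes.ofRes (ProjectiveResolution.of RSobj)
  let CH : ConcRes (ModuleCat.of R H) := ConcRes.ofRes (ProjectiveResolution.of _)
  haveI : Projective (ModuleCat.of R P) := (IsProjective.iff_projective.{u,u} P).1 hP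
  let iH : ModuleCat.of R H ⟶ ModuleCat.of R P := ModuleCat.ofHom i
  let pH : ModuleCat.of R P ⟶ RSobj := ModuleCat.ofHom p
  let spliceH : ConcRes RSobj := CH.splice iH pH hi hp hip
  -- weakly cotorsion predicate on objects
  let WCp : ModuleCat.{u} R → Prop := fun Y => IsWeaklyCotorsion R S ↥Y
  -- h1 : wc → Ext²(R_S, -) = 0 in concrete form
  have h1 : ∀ Y : ModuleCat.{u} R, WCp Y → EVc CRS 1 Y := by
    intro Y hY
    have hExtH : Subsingleton (((Ext R (ModuleCat.{u} R) (0+1)).obj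
        (Opposite.op (ModuleCat.of R H))).obj Y) := hH ↥Y hY
    exact (ev_iff CRS 1 Y).1 ((ev_iff spliceH 1 Y).2
      ((evc_splice_succ CH iH pH hi hp hip 0 Y).2 ((ev_iff CH 0 Y).1 hExtH)))
  -- h2 : cosyzygy of a wc module is wc
  have h2 : ∀ Y : ModuleCat.{u} R, WCp Y → ∃ (E D : ModuleCat.{u} R) (f : Y ⟶ E)
      (g : E ⟶ D), InjProp E ∧ Function.Injective f ∧ Function.Surjective g ∧
      Function.Exact f g ∧ WCp D := by
    intro Y hY
    obtain ⟨E, D, f, g, hE, hf, hg, hfg⟩ := cosyzygy Y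
    refine ⟨E, D, f, g, hE, hf, hg, hfg, ?_⟩
    show Subsingleton (((Ext R (ModuleCat.{u} R) 1).obj
      (Opposite.op (ModuleCat.of R (Localization S)))).obj (ModuleCat.of R ↥D))
    exact (ev_iff CRS 0 D).2
      (chase3 CRS f g hf hg hfg 0 (h1 Y hY) (evc_of_injProp CRS hE 0))
  -- h3 : upward step
  have h3 : ∀ (M' : ModuleCat.{u} R) (CM : ConcRes M') (k : ℕ),
      (∀ Y, WCp Y → EVc CM k Y) → ∀ Y, WCp Y → EVc CM (k+1) Y := by
    intro M' CM k hk Y hY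
    obtain ⟨E, D, f, g, hE, hf, hg, hfg, hD⟩ := h2 Y hY
    exact chase2 CM f g hf hg hfg k (hk D hD) (evc_of_injProp CM hE (k+1))
  -- h4 : descent through cosyzygies
  have h4 : ∀ (j : ℕ) (Y : ModuleCat.{u} R), WCp Y → ∃ Z : ModuleCat.{u} R, WCp Z ∧
      (∀ (M' : ModuleCat.{u} R) (CM : ConcRes M') (k : ℕ), EVc CM (k+j) Y → EVc CM k Z) ∧
      (∀ (M' : ModuleCat.{u} R) (CM : ConcRes M') (k : ℕ), EVc CM k Z → EVc CM (k+j) Y) := by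
    intro j
    induction j with
    | zero =>
      intro Y hY
      exact ⟨Y, hY, fun M' CM k h => h, fun M' CM k h => h⟩
    | succ j IH =>
      intro Y hY
      obtain ⟨Z, hZ, down, up⟩ := IH Y hY
      obtain ⟨E, D, f, g, hE, hf, hg, hfg, hD⟩ := h2 Z hZ
      refine ⟨D, hD, ?_, ?_⟩
      · intro M' CM k h
        have h' : EVc CM ((k+1)+j) Y := by
          rw [show (k+1)+j = k+(j+1) by omega]
          exact h
        exact chase3 CM f g hf hg hfg k (down M' CM (k+1) h') (evc_of_injProp CM hE k)
      · intro M' CM k h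
        have h' : EVc CM (k+1) Z :=
          chase2 CM f g hf hg hfg k h (evc_of_injProp CM hE (k+1))
        have := up M' CM (k+1) h'
        rw [show (k+1)+j = k+(j+1) by omega] at this
        exact this
  -- h5 : from hcyc, concrete vanishing at level n for cyclic modules
  have h5 : ∀ (M' : Type u) [AddCommGroup M'] [Module R M'],
      (∃ x : M', Submodule.span R {x} = ⊤) →
      ∀ (CM : ConcRes (ModuleCat.of R M')) (Y : ModuleCat.{u} R), WCp Y → EVc CM n Y := by
    intro M' _ _ hc CM
    have hle := hcyc M' hc
    unfold sfdim at hle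
    have hex : ∃ a ∈ {nn : ℕ∞ | ∃ m : ℕ, nn = m ∧
        ∀ (C : Type u) [AddCommGroup C] [Module R C],
          IsWeaklyCotorsion R S C → extVanish R (m + 1) M' C}, a ≤ (n : ℕ∞) := by
      by_contra hcon
      push_neg at hcon
      have : (n : ℕ∞) + 1 ≤ sInf {nn : ℕ∞ | ∃ m : ℕ, nn = m ∧
          ∀ (C : Type u) [AddCommGroup C] [Module R C],
            IsWeaklyCotorsion R S C → extVanish R (m + 1) M' C} := by
        apply le_sInf
        intro b hb
        exact Order.add_one_le_of_lt (hcon b hb)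
      have hbad : (n : ℕ∞) + 1 ≤ (n : ℕ∞) := le_trans this hle
      have : ((n : ℕ∞) : ℕ∞) < (n : ℕ∞) + 1 := by
        exact_mod_cast lt_of_lt_of_le (Nat.lt_succ_self n) (by exact_mod_cast le_refl _)
      exact absurd (lt_of_lt_of_le this hbad) (lt_irrefl _)
    obtain ⟨a, ⟨m, rfl, hprop⟩, hale⟩ := hex
    have hmn : m ≤ n := by exact_mod_cast hale
    have base : ∀ Y : ModuleCat.{u} R, WCp Y → EVc CM m Y := by
      intro Y hY
      have := hprop ↥Y hY
      exact (ev_iff CM m Y).1 this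
    have climb : ∀ k : ℕ, m ≤ k → ∀ Y : ModuleCat.{u} R, WCp Y → EVc CM k Y := by
      intro k
      induction k with
      | zero =>
        intro hk
        have : m = 0 := Nat.le_zero.1 hk
        subst this
        exact base
      | succ k ih =>
        intro hk
        rcases Nat.lt_or_ge m (k+1) with hlt | hge
        · exact h3 _ CM k (ih (Nat.lt_succ_iff.1 hlt))
        · have : m = k+1 := le_antisymm hk hge
          subst this
          exact base
    exact climb n hmn
  -- main
  intro M _ _
  unfold sfdim
  apply sInf_le
  refine ⟨n, rfl, ?_⟩
  intro Ct _ _ hCt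
  let Y : ModuleCat.{u} R := ModuleCat.of R Ct
  have hY : WCp Y := hCt
  let Mobj : ModuleCat.{u} R := ModuleCat.of R M
  let CM : ConcRes Mobj := ConcRes.ofRes (ProjectiveResolution.of _)
  obtain ⟨Z, hZwc, down, up⟩ := h4 n Y hY
  -- Z satisfies Baer's criterion
  have hbaer : Module.Baer R ↥Z := by
    intro I gI
    haveI : Projective (ModuleCat.of R R) :=
      (IsProjective.iff_projective.{u,u} R).1 (inferInstance : Module.Projective R R)
    let CI : ConcRes (ModuleCat.of R ↥I) := ConcRes.ofRes (ProjectiveResolution.of _)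
    let CQ : ConcRes (ModuleCat.of R (R ⧸ I)) := ConcRes.ofRes (ProjectiveResolution.of _)
    let spliceI : ConcRes (ModuleCat.of R (R ⧸ I)) :=
      CI.splice (ModuleCat.ofHom I.subtype) (ModuleCat.ofHom I.mkQ)
        (Submodule.injective_subtype I) (Submodule.mkQ_surjective I)
        (LinearMap.exact_subtype_mkQ I)
    have hq : EVc CQ n Y := h5 (R ⧸ I) (quotient_cyclic I) CQ Y hY
    have hq0 : EVc CQ 0 Z := down _ CQ 0 (by rw [Nat.zero_add]; exact hq)
    have hsub : Subsingleton (((Ext R (ModuleCat.{u} R) (0+1)).obj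
        (Opposite.op (ModuleCat.of R (R ⧸ I)))).obj Z) := (ev_iff CQ 0 Z).2 hq0
    have hsp : EVc spliceI 0 Z := (ev_iff spliceI 0 Z).1 hsub
    obtain ⟨gg, hgg⟩ := baer_of_evc CI (ModuleCat.ofHom I.subtype) (ModuleCat.ofHom I.mkQ)
      (Submodule.injective_subtype I) (Submodule.mkQ_surjective I)
      (LinearMap.exact_subtype_mkQ I) Z hsp (ModuleCat.ofHom gI)
    refine ⟨gg.hom, ?_⟩
    intro x hx
    have := congr_fun (congr_arg (fun (h : ModuleCat.of R ↥I ⟶ Z) => (h : _ → _)) hgg)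
      (⟨x, hx⟩ : ↥I)
    exact this
  have hinjZ : InjProp Z := injProp_of_moduleInjective Z hbaer.injective
  have hz : EVc CM 0 Z := evc_of_injProp CM hinjZ 0
  have hup : EVc CM (0+n) Y := up Mobj CM 0 hz
  rw [Nat.zero_add] at hup
  exact (ev_iff CM n Y).2 hup
end

section
/- If every S-weakly cotorsion R-module has an injective envelope with the unique mapping property, then every S-weakly cotorsion R-module is injective. -/
open CategoryTheory

universe u

variable (R : Type u) [CommRing R]

/-- If every `S`-weakly cotorsion `R`-module has an injective envelope with the unique
mapping property (an injective essential extension `f : C → E` such that every map from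
`C` to an injective module factors uniquely through `f`), then every `S`-weakly
cotorsion `R`-module is injective. -/
theorem weaklyCotorsion_injective_of_envelope_ump (S : Submonoid R)
    (henv : ∀ (C : Type u) [AddCommGroup C] [Module R C], IsWeaklyCotorsion R S C →
      ∃ (E : ModuleCat.{u} R) (f : C →ₗ[R] E),
        Module.Injective R E ∧ Function.Injective f ∧
        (∀ N : Submodule R E, N ≠ ⊥ → N ⊓ LinearMap.range f ≠ ⊥) ∧
        (∀ (E' : Type u) [AddCommGroup E'] [Module R E'], Module.Injective R E' →
          ∀ g : C →ₗ[R] E', ∃! h : E →ₗ[R] E', h.comp f = g)) :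
    ∀ (C : Type u) [AddCommGroup C] [Module R C],
      IsWeaklyCotorsion R S C → Module.Injective R C := by
  intro C _ _ hC
  obtain ⟨E, f, hEinj, hfinj, _hess, hump⟩ := henv C hC
  -- embed the cokernel of f into an injective module
  have : EnoughInjectives (ModuleCat.{u} R) := ModuleCat.enoughInjectives.{u, u} R
  set Q : ModuleCat.{u} R := ModuleCat.of R (E ⧸ LinearMap.range f)
  let J : ModuleCat.{u} R := Injective.under Q
  have hJinj : Module.Injective R J :=
    Module.injective_module_of_injective_object R J (inj := Injective.injective_under Q)
  have hιmono : Function.Injective (Injective.ι Q) :=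
    (ModuleCat.mono_iff_injective (Injective.ι Q)).mp inferInstance
  -- the composite E → E/range f → J kills f
  let π : E →ₗ[R] J :=
    (Injective.ι Q).hom.comp (LinearMap.range f).mkQ
  have hπf : π.comp f = 0 := by
    ext x
    simp only [π, LinearMap.comp_apply, LinearMap.zero_apply]
    have h0 : (LinearMap.range f).mkQ (f x) = 0 := by
      simp [Submodule.Quotient.mk_eq_zero]
    erw [h0, map_zero]
  obtain ⟨h, -, huniq⟩ := hump J hJinj (0 : C →ₗ[R] J)
  have hπ0 : π = 0 := by
    rw [huniq π hπf, huniq 0 (by simp)]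
  have hsurj : Function.Surjective f := by
    intro y
    have : (LinearMap.range f).mkQ y = 0 := by
      apply hιmono
      have := congrFun (congrArg DFunLike.coe hπ0) y
      have h2 : (Injective.ι Q).hom ((LinearMap.range f).mkQ y) = 0 := this.trans (LinearMap.zero_apply y)
      rw [map_zero]
      exact h2
    simpa [← LinearMap.mem_range, Submodule.Quotient.mk_eq_zero] using this
  let e : C ≃ₗ[R] E := LinearEquiv.ofBijective f ⟨hfinj, hsurj⟩
  constructor
  intro X Y _ _ _ _ i hi g
  obtain ⟨ext, hext⟩ := hEinj.out i hi ((e : C →ₗ[R] E).comp g)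
  refine ⟨(e.symm : E →ₗ[R] C).comp ext, fun x => ?_⟩
  simp [hext x]
end
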